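/- Let n ≥ 2. The group Aut(ℂⁿ) of bijective holomorphic self-maps of ℂⁿ with holomorphic inverse, equipped with the compact-open topology, is connected. -/

import Mathlib

open Function Polynomial Set

namespace AutCn

variable {n : ℕ}

def S (n : ℕ) : Set C((Fin n → ℂ), (Fin n → ℂ)) :=
  {F | Differentiable ℂ F ∧ ∃ G : (Fin n → ℂ) → (Fin n → ℂ),
      Differentiable ℂ G ∧ LeftInverse G F ∧ RightInverse G F}

lemma differentiable_linear (f : (Fin n → ℂ) →ₗ[ℂ] (Fin n → ℂ)) : Differentiable ℂ ⇑f := by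
  have := (LinearMap.toContinuousLinearMap f).differentiable
  simpa using this

noncomputable def cmOfLinear (f : (Fin n → ℂ) →ₗ[ℂ] (Fin n → ℂ)) :
    C((Fin n → ℂ), (Fin n → ℂ)) :=
  ⟨f, f.continuous_of_finiteDimensional⟩

lemma mem_of_linearEquiv (e : (Fin n → ℂ) ≃ₗ[ℂ] (Fin n → ℂ)) :
    cmOfLinear e.toLinearMap ∈ S n :=
  ⟨differentiable_linear _, ⇑e.symm, differentiable_linear e.symm.toLinearMap,
    e.left_inv, e.right_inv⟩

lemma mem_congr {F F' : C((Fin n → ℂ), (Fin n → ℂ))} (h : ∀ z, F z = F' z)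
    (hF' : F' ∈ S n) : F ∈ S n := by
  have : F = F' := ContinuousMap.ext h
  rw [this]; exact hF'

lemma joinedIn_of_family (Φ : C(unitInterval × (Fin n → ℂ), (Fin n → ℂ)))
    {F₀ F₁ : C((Fin n → ℂ), (Fin n → ℂ))}
    (h₀ : ∀ z, Φ (0, z) = F₀ z) (h₁ : ∀ z, Φ (1, z) = F₁ z)
    (hmem : ∀ t : unitInterval, Φ.curry t ∈ S n) :
    JoinedIn (S n) F₀ F₁ := by
  refine ⟨⟨⟨fun t => Φ.curry t, Φ.curry.continuous⟩, ?_, ?_⟩, fun t => hmem t⟩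
  · exact ContinuousMap.ext fun z => h₀ z
  · exact ContinuousMap.ext fun z => h₁ z

lemma joinedIn_linear (e : (Fin n → ℂ) ≃ₗ[ℂ] (Fin n → ℂ)) :
    JoinedIn (S n) (cmOfLinear e.toLinearMap) (ContinuousMap.id _) := by
  classical
  set b : Module.Basis (Fin n) ℂ (Fin n → ℂ) := Pi.basisFun ℂ (Fin n) with hb
  set M : Matrix (Fin n) (Fin n) ℂ := LinearMap.toMatrix b b e.toLinearMap with hM
  -- the family of linear maps
  set L : ℂ → ((Fin n → ℂ) →ₗ[ℂ] (Fin n → ℂ)) :=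
    fun c => c • e.toLinearMap + (1 - c) • LinearMap.id with hL
  -- polynomial whose roots are the bad parameter values
  set q : ℂ[X] := ((X : ℂ[X]) • M.map C + ((1 : ℂ[X]) - X) • 1).det with hq
  have heval : ∀ c : ℂ, eval c q = (LinearMap.toMatrix b b (L c)).det := by
    intro c
    have h1 : eval c q = (((X : ℂ[X]) • M.map C + ((1 : ℂ[X]) - X) • 1).map (evalRingHom c)).det := by
      have := RingHom.map_det (evalRingHom c) ((X : ℂ[X]) • M.map C + ((1 : ℂ[X]) - X) • 1)
      simpa [RingHom.mapMatrix_apply, hq] using this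
    have h2 : ((X : ℂ[X]) • M.map C + ((1 : ℂ[X]) - X) • 1).map (evalRingHom c)
        = c • M + (1 - c) • 1 := by
      ext i j
      simp [Matrix.map_apply, Matrix.add_apply, Matrix.smul_apply, Matrix.one_apply]
      split <;> simp [mul_comm]
    have h3 : LinearMap.toMatrix b b (L c) = c • M + (1 - c) • 1 := by
      rw [hL]
      simp [map_add, map_smul, LinearMap.toMatrix_id, hM]
    rw [h1, h2, h3]
  have hq1 : eval 1 q ≠ 0 := by
    rw [heval]
    have hL1 : L 1 = e.toLinearMap := by simp [hL]
    rw [hL1, LinearMap.det_toMatrix]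
    exact (LinearEquiv.isUnit_det' e).ne_zero
  have hq0 : eval 0 q ≠ 0 := by
    rw [heval]
    have hL0 : L 0 = LinearMap.id := by simp [hL]
    rw [hL0, LinearMap.toMatrix_id]
    simp
  have hqne : q ≠ 0 := fun h => hq0 (by simp [h])
  have hbadfin : ({c : ℂ | IsRoot q c}).Finite := finite_setOf_isRoot hqne
  have hpc : IsPathConnected ({c : ℂ | IsRoot q c}ᶜ) := by
    refine Set.Countable.isPathConnected_compl_of_one_lt_rank ?_ hbadfin.countable
    rw [Complex.rank_real_complex]; norm_num
  have h1mem : (1 : ℂ) ∈ ({c : ℂ | IsRoot q c}ᶜ) := by simpa [IsRoot] using hq1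
  have h0mem : (0 : ℂ) ∈ ({c : ℂ | IsRoot q c}ᶜ) := by simpa [IsRoot] using hq0
  obtain ⟨γ, hγ⟩ := hpc.joinedIn 1 h1mem 0 h0mem
  -- the continuous family
  have hΦ : Continuous (fun p : unitInterval × (Fin n → ℂ) =>
      (γ p.1 : ℂ) • e p.2 + (1 - (γ p.1 : ℂ)) • p.2) := by
    have hγc : Continuous fun p : unitInterval × (Fin n → ℂ) => (γ p.1 : ℂ) :=
      γ.continuous.comp continuous_fst
    exact (hγc.smul ((e.toLinearMap.continuous_of_finiteDimensional).comp
      continuous_snd)).add ((continuous_const.sub hγc).smul continuous_snd)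
  have key : ∀ t : unitInterval, ∀ z, ((⟨_, hΦ⟩ : C(unitInterval × (Fin n → ℂ), _)).curry t) z
      = L (γ t) z := by
    intro t z
    simp [hL, LinearMap.add_apply, LinearMap.smul_apply]
  refine joinedIn_of_family ⟨_, hΦ⟩ (fun z => ?_) (fun z => ?_) (fun t => ?_)
  · simp [cmOfLinear, γ.source]
  · simp [γ.target]
  · have hdet : IsUnit (LinearMap.toMatrix b b (L (γ t))).det := by
      rw [← heval]
      exact isUnit_iff_ne_zero.mpr (hγ t)
    have eL := LinearEquiv.ofIsUnitDet hdet
    refine mem_congr (F' := cmOfLinear (L (γ t))) (key t) ?_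
    have : cmOfLinear (L (γ t)) = cmOfLinear (LinearEquiv.ofIsUnitDet hdet).toLinearMap := by
      apply ContinuousMap.ext; intro z
      simp [cmOfLinear, LinearEquiv.coe_ofIsUnitDet]
    rw [this]
    exact mem_of_linearEquiv _

lemma joinedIn_translate (F : C((Fin n → ℂ), (Fin n → ℂ))) (hF : F ∈ S n) :
    JoinedIn (S n) F ⟨fun z => F z - F 0, F.continuous.sub continuous_const⟩ := by
  obtain ⟨hFd, G, hGd, hGF, hFG⟩ := hF
  have hu : Continuous (fun p : unitInterval × (Fin n → ℂ) => F p.2 - (p.1 : ℝ) • F 0) :=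
    (F.continuous.comp continuous_snd).sub
      ((continuous_subtype_val.comp continuous_fst).smul continuous_const)
  refine joinedIn_of_family ⟨_, hu⟩ (fun z => by simp) (fun z => by simp) (fun t => ?_)
  set c : Fin n → ℂ := (t : ℝ) • F 0 with hc
  refine ⟨?_, fun z => G (z + c), hGd.comp (differentiable_id.add_const c), ?_, ?_⟩
  · exact (hFd.sub_const c : Differentiable ℂ (fun z => F z - c))
  · intro z
    simp only [ContinuousMap.curry_apply, ContinuousMap.coe_mk]
    rw [sub_add_cancel, hGF z]
  · intro z
    simp only [ContinuousMap.curry_apply, ContinuousMap.coe_mk]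
    rw [hFG (z + c), add_sub_cancel_right]


lemma joinedIn_scale (F : C((Fin n → ℂ), (Fin n → ℂ))) (hF : F ∈ S n) (h0 : F 0 = 0) :
    ∃ e : (Fin n → ℂ) ≃ₗ[ℂ] (Fin n → ℂ),
      JoinedIn (S n) (cmOfLinear e.toLinearMap) F := by
  obtain ⟨hFd, G, hGd, hGF, hFG⟩ := hF
  have hG0 : G 0 = 0 := by
    conv_lhs => rw [← h0]
    exact hGF 0
  set A := fderiv ℂ F 0 with hA
  set B := fderiv ℂ G 0 with hB
  have hAd : HasFDerivAt F A 0 := (hFd 0).hasFDerivAt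
  have hBd : HasFDerivAt G B 0 := (hGd 0).hasFDerivAt
  have hBA : B.comp A = ContinuousLinearMap.id ℂ (Fin n → ℂ) := by
    have h1 : HasFDerivAt (G ∘ F) (B.comp A) 0 := by
      refine HasFDerivAt.comp 0 ?_ hAd
      rw [h0]; exact hBd
    have h2 : G ∘ F = id := funext hGF
    rw [h2] at h1
    exact h1.unique (hasFDerivAt_id 0)
  have hAB : A.comp B = ContinuousLinearMap.id ℂ (Fin n → ℂ) := by
    have h1 : HasFDerivAt (F ∘ G) (A.comp B) 0 := by
      refine HasFDerivAt.comp 0 ?_ hBd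
      rw [hG0]; exact hAd
    have h2 : F ∘ G = id := funext hFG
    rw [h2] at h1
    exact h1.unique (hasFDerivAt_id 0)
  refine ⟨LinearEquiv.ofLinear A.toLinearMap B.toLinearMap
    (LinearMap.ext fun z => ContinuousLinearMap.ext_iff.mp hAB z)
    (LinearMap.ext fun z => ContinuousLinearMap.ext_iff.mp hBA z), ?_⟩
  set u : unitInterval × (Fin n → ℂ) → (Fin n → ℂ) := fun p =>
    if ((p.1 : ℝ) : ℂ) = 0 then A p.2 else ((p.1 : ℝ) : ℂ)⁻¹ • F (((p.1 : ℝ) : ℂ) • p.2)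
    with hu
  have hu0 : ∀ (t : unitInterval) (z : Fin n → ℂ), ((t : ℝ) : ℂ) = 0 → u (t, z) = A z := by
    intro t z h; rw [hu]; exact if_pos h
  have hu1 : ∀ (t : unitInterval) (z : Fin n → ℂ), ((t : ℝ) : ℂ) ≠ 0 →
      u (t, z) = ((t : ℝ) : ℂ)⁻¹ • F (((t : ℝ) : ℂ) • z) := by
    intro t z h; rw [hu]; exact if_neg h
  have hc : Continuous fun p : unitInterval × (Fin n → ℂ) => ((p.1 : ℝ) : ℂ) :=
    Complex.continuous_ofReal.comp (continuous_subtype_val.comp continuous_fst)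
  have hucont : Continuous u := by
    rw [continuous_iff_continuousAt]
    rintro ⟨t₀, z₀⟩
    by_cases ht : ((t₀ : ℝ) : ℂ) = 0
    · rw [Metric.continuousAt_iff]
      intro ε εpos
      have hz1 : (0:ℝ) < ‖z₀‖ + 1 := by positivity
      set ε' : ℝ := ε / (2 * (‖z₀‖ + 1)) with hε'
      have hε'pos : 0 < ε' := by positivity
      have hlo := hAd.isLittleO
      rw [Asymptotics.isLittleO_iff] at hlo
      have hev := hlo hε'pos
      rw [Metric.eventually_nhds_iff] at hev
      obtain ⟨δ, δpos, hδ⟩ := hev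
      set δ₂ : ℝ := min 1 (min (δ / (‖z₀‖ + 1) / 2) (ε / (2 * (‖A‖ + 1)))) with hδ₂
      have hδ₂pos : 0 < δ₂ := by
        simp only [hδ₂, lt_min_iff]
        refine ⟨one_pos, by positivity, by positivity⟩
      refine ⟨δ₂, hδ₂pos, ?_⟩
      rintro ⟨t, z⟩ hdist
      have hdt : dist t t₀ < δ₂ := lt_of_le_of_lt (by
        rw [Prod.dist_eq]; exact le_max_left _ _) hdist
      have hdz : dist z z₀ < δ₂ := lt_of_le_of_lt (by
        rw [Prod.dist_eq]; exact le_max_right _ _) hdist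
      have hzb : ‖z‖ ≤ ‖z₀‖ + 1 := by
        have h1 : ‖z‖ - ‖z₀‖ ≤ ‖z - z₀‖ := norm_sub_norm_le z z₀
        have h2 : ‖z - z₀‖ = dist z z₀ := (dist_eq_norm z z₀).symm
        have h3 : δ₂ ≤ 1 := min_le_left _ _
        linarith [hdz]
      have hst : ‖((t : ℝ) : ℂ)‖ < δ₂ := by
        have ht0 : (t₀ : ℝ) = 0 := by exact_mod_cast ht
        have hd : dist (t : ℝ) (t₀ : ℝ) < δ₂ := by
          rw [← Subtype.dist_eq]; exact hdt
        rw [ht0] at hd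
        simpa [Complex.norm_real, Real.dist_eq] using hd
      have hterm2 : ‖A z - A z₀‖ < ε / 2 := by
        have h1 : ‖A z - A z₀‖ ≤ ‖A‖ * ‖z - z₀‖ := by
          rw [← map_sub]; exact A.le_opNorm _
        have h2 : ‖z - z₀‖ < δ₂ := by rwa [← dist_eq_norm]
        have h3 : δ₂ ≤ ε / (2 * (‖A‖ + 1)) := le_trans (min_le_right _ _) (min_le_right _ _)
        have hA1 : (0:ℝ) < ‖A‖ + 1 := by positivity
        calc ‖A z - A z₀‖ ≤ ‖A‖ * ‖z - z₀‖ := h1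
          _ < (‖A‖ + 1) * δ₂ :=
              mul_lt_mul' (by linarith) h2 (norm_nonneg _) hA1
          _ ≤ (‖A‖ + 1) * (ε / (2 * (‖A‖ + 1))) :=
              mul_le_mul_of_nonneg_left h3 (by linarith)
          _ = ε / 2 := by field_simp
      have hterm1 : ‖u (t, z) - A z‖ ≤ ε / 2 := by
        by_cases hs : ((t : ℝ) : ℂ) = 0
        · rw [hu0 t z hs]; simp; positivity
        · set s : ℂ := ((t : ℝ) : ℂ) with hss
          have hsz : ‖s • z‖ < δ := by
            calc ‖s • z‖ = ‖s‖ * ‖z‖ := norm_smul s z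
              _ ≤ ‖s‖ * (‖z₀‖ + 1) := mul_le_mul_of_nonneg_left hzb (norm_nonneg _)
              _ < δ₂ * (‖z₀‖ + 1) := mul_lt_mul_of_pos_right hst hz1
              _ ≤ (δ / (‖z₀‖ + 1) / 2) * (‖z₀‖ + 1) := by
                  have h4 : δ₂ ≤ δ / (‖z₀‖ + 1) / 2 := le_trans (min_le_right _ _) (min_le_left _ _)
                  exact mul_le_mul_of_nonneg_right h4 (by linarith)
              _ = δ / 2 := by field_simp
              _ < δ := by linarith
          have hbound := hδ (y := s • z) (by simpa [dist_eq_norm] using hsz)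
          simp only [sub_zero, h0] at hbound
          have heq : u (t, z) - A z = s⁻¹ • (F (s • z) - A (s • z)) := by
            rw [hu1 t z hs, smul_sub, A.map_smul, inv_smul_smul₀ hs]
          rw [heq, norm_smul, norm_inv]
          have hsnorm : ‖s‖ ≠ 0 := norm_ne_zero_iff.mpr hs
          calc ‖s‖⁻¹ * ‖F (s • z) - A (s • z)‖ ≤ ‖s‖⁻¹ * (ε' * ‖s • z‖) :=
                mul_le_mul_of_nonneg_left hbound (by positivity)
            _ = ‖s‖⁻¹ * (ε' * (‖s‖ * ‖z‖)) := by rw [norm_smul]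
            _ = (‖s‖⁻¹ * ‖s‖) * (ε' * ‖z‖) := by ring
            _ = ε' * ‖z‖ := by rw [inv_mul_cancel₀ hsnorm, one_mul]
            _ ≤ ε' * (‖z₀‖ + 1) := mul_le_mul_of_nonneg_left hzb (le_of_lt hε'pos)
            _ = ε / 2 := by rw [hε']; field_simp
      rw [dist_eq_norm, hu0 t₀ z₀ ht]
      calc ‖u (t, z) - A z₀‖ ≤ ‖u (t, z) - A z‖ + ‖A z - A z₀‖ := by
            have h5 := norm_add_le (u (t, z) - A z) (A z - A z₀)
            simpa [sub_add_sub_cancel] using h5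
        _ < ε / 2 + ε / 2 := add_lt_add_of_le_of_lt hterm1 hterm2
        _ = ε := by ring
    · have hopen : IsOpen {p : unitInterval × (Fin n → ℂ) | ((p.1 : ℝ) : ℂ) ≠ 0} :=
        isOpen_compl_iff.mpr (isClosed_singleton.preimage hc)
      have hmem : (⟨t₀, z₀⟩ : unitInterval × (Fin n → ℂ)) ∈
          {p : unitInterval × (Fin n → ℂ) | ((p.1 : ℝ) : ℂ) ≠ 0} := ht
      have hev : ∀ᶠ p in nhds (⟨t₀, z₀⟩ : unitInterval × (Fin n → ℂ)),
          u p = ((p.1 : ℝ) : ℂ)⁻¹ • F (((p.1 : ℝ) : ℂ) • p.2) := by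
        filter_upwards [hopen.mem_nhds hmem] with p hp
        exact hu1 p.1 p.2 hp
      have hg : ContinuousAt (fun p : unitInterval × (Fin n → ℂ) =>
          ((p.1 : ℝ) : ℂ)⁻¹ • F (((p.1 : ℝ) : ℂ) • p.2)) ⟨t₀, z₀⟩ :=
        ((hc.continuousAt).inv₀ ht).smul
          ((F.continuous.comp (hc.smul continuous_snd)).continuousAt)
      exact hg.congr (Filter.EventuallyEq.symm hev)
  refine joinedIn_of_family ⟨u, hucont⟩ (fun z => ?_) (fun z => ?_) (fun t => ?_)
  · rw [ContinuousMap.coe_mk, hu0 0 z (by norm_num)]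
    rfl
  · rw [ContinuousMap.coe_mk, hu1 1 z (by norm_num)]
    norm_num
  · by_cases hs : ((t : ℝ) : ℂ) = 0
    · have hfun : ∀ z, u (t, z) = A z := fun z => hu0 t z hs
      refine ⟨?_, ⇑B, B.differentiable, ?_, ?_⟩
      · show Differentiable ℂ (fun z => u (t, z))
        rw [show (fun z : Fin n → ℂ => u (t, z)) = ⇑A from funext hfun]
        exact A.differentiable
      · intro z
        show B (u (t, z)) = z
        rw [hfun z]
        exact ContinuousLinearMap.ext_iff.mp hBA z
      · intro z
        show u (t, B z) = z
        rw [hfun (B z)]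
        exact ContinuousLinearMap.ext_iff.mp hAB z
    · set s : ℂ := ((t : ℝ) : ℂ) with hss
      have hfun : ∀ z, u (t, z) = s⁻¹ • F (s • z) := fun z => hu1 t z hs
      refine ⟨?_, fun z => s⁻¹ • G (s • z), ?_, ?_, ?_⟩
      · show Differentiable ℂ (fun z => u (t, z))
        rw [show (fun z : Fin n → ℂ => u (t, z)) = fun z => s⁻¹ • F (s • z) from funext hfun]
        exact ((hFd.comp (differentiable_id.const_smul s)).const_smul s⁻¹)
      · exact ((hGd.comp (differentiable_id.const_smul s)).const_smul s⁻¹)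
      · intro z
        show s⁻¹ • G (s • u (t, z)) = z
        rw [hfun z, smul_inv_smul₀ hs, hGF (s • z), inv_smul_smul₀ hs]
      · intro z
        show u (t, s⁻¹ • G (s • z)) = z
        rw [hfun (s⁻¹ • G (s • z)), smul_inv_smul₀ hs, hFG (s • z), inv_smul_smul₀ hs]


lemma id_mem : ContinuousMap.id (Fin n → ℂ) ∈ S n :=
  ⟨differentiable_id, id, differentiable_id, fun _ => rfl, fun _ => rfl⟩

end AutCn

/-- For `n ≥ 2`, the group `Aut(ℂⁿ)` of biholomorphic automorphisms
of `ℂⁿ`, regarded as a subspace of `C(ℂⁿ, ℂⁿ)` with the compact-open topology,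
is connected. -/
theorem aut_Cn_is_connected (n : ℕ) (hn : 2 ≤ n) :
    IsConnected {F : C((Fin n → ℂ), (Fin n → ℂ)) |
      Differentiable ℂ F ∧
      ∃ G : (Fin n → ℂ) → (Fin n → ℂ),
        Differentiable ℂ G ∧ Function.LeftInverse G F ∧
        Function.RightInverse G F} := by
  have h : IsPathConnected (AutCn.S n) := by
    refine ⟨ContinuousMap.id _, AutCn.id_mem, fun {F} hF => ?_⟩
    set F₁ : C((Fin n → ℂ), (Fin n → ℂ)) :=
      ⟨fun z => F z - F 0, F.continuous.sub continuous_const⟩ with hF₁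
    have h1 : JoinedIn (AutCn.S n) F F₁ := AutCn.joinedIn_translate F hF
    have hF₁mem : F₁ ∈ AutCn.S n := h1.target_mem
    have hF₁0 : F₁ 0 = 0 := sub_self _
    obtain ⟨e, h2⟩ := AutCn.joinedIn_scale F₁ hF₁mem hF₁0
    have h3 := AutCn.joinedIn_linear e
    exact h3.symm.trans (h2.trans h1.symm)
  exact h.isConnected
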